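/- For |q| < 1 formally (as formal power series in x over ℚ(q) or with q a variable), the structure function f(x) = exp(∑_{n≥1} (1/n)·((1-q₁ⁿ)(1-q₂ⁿ)/(1+q₃⁻ⁿ))·xⁿ) factorizes as f(x) = (1/(1-x))·β(q₁ q x)·β(q⁻¹q₁⁻¹ x), where β(x) = (qx; q⁴)_∞/(q³x; q⁴)_∞, q² = q₃, and q₁q₂q₃ = 1. -/

import Mathlib

open Complex

-- basic norm fact
lemma norm_term_lt {a p : ℂ} (ha : ‖a‖ < 1) (hp : ‖p‖ < 1) (k : ℕ) :
    ‖a * p ^ k‖ < 1 := by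
  calc ‖a * p ^ k‖ = ‖a‖ * ‖p‖ ^ k := by rw [norm_mul, norm_pow]
  _ ≤ ‖a‖ * 1 := by
      have := pow_le_one₀ (norm_nonneg p) hp.le (n := k)
      exact mul_le_mul_of_nonneg_left this (norm_nonneg a)
  _ < 1 := by simpa using ha

lemma one_sub_ne_zero {z : ℂ} (hz : ‖z‖ < 1) : 1 - z ≠ 0 := by
  intro h
  rw [sub_eq_zero] at h
  rw [← h] at hz
  simp at hz

-- shifted Taylor series of -log(1-z)
lemma hasSum_neg_log {z : ℂ} (hz : ‖z‖ < 1) :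
    HasSum (fun n : ℕ => z ^ (n + 1) / ((n : ℂ) + 1)) (-Complex.log (1 - z)) := by
  have h := Complex.hasSum_taylorSeries_neg_log hz
  have h0 : (fun n : ℕ => z ^ n / (n : ℂ)) 0 = 0 := by simp
  have := (hasSum_nat_add_iff' (f := fun n : ℕ => z ^ n / (n : ℂ)) 1).mpr h
  simpa using this


section key
variable {a p : ℂ} (ha : ‖a‖ < 1) (hp : ‖p‖ < 1)

include ha hp in
lemma summable_F :
    Summable (fun kn : ℕ × ℕ => (a * p ^ kn.1) ^ (kn.2 + 1) / ((kn.2 : ℂ) + 1)) := by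
  have s1 : Summable (fun k : ℕ => ‖p‖ ^ k) := summable_geometric_of_lt_one (norm_nonneg p) hp
  have s2 : Summable (fun n : ℕ => ‖a‖ * ‖a‖ ^ n) :=
    (summable_geometric_of_lt_one (norm_nonneg a) ha).mul_left ‖a‖
  have hg : Summable (fun kn : ℕ × ℕ => (‖p‖ ^ kn.1) * (‖a‖ * ‖a‖ ^ kn.2)) := by
    have := s1.mul_of_nonneg s2 (fun k => pow_nonneg (norm_nonneg p) k)
      (fun n => mul_nonneg (norm_nonneg a) (pow_nonneg (norm_nonneg a) n))
    exact this
  refine Summable.of_norm_bounded hg ?_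
  rintro ⟨k, n⟩
  have h1 : ‖(a * p ^ k) ^ (n + 1) / ((n : ℂ) + 1)‖
      ≤ ‖(a * p ^ k) ^ (n + 1)‖ := by
    rw [norm_div]
    have : (1 : ℝ) ≤ ‖((n : ℂ) + 1)‖ := by
      have : ((n : ℂ) + 1) = ((n + 1 : ℕ) : ℂ) := by push_cast; ring
      rw [this, Complex.norm_natCast]
      exact_mod_cast Nat.one_le_iff_ne_zero.mpr (Nat.succ_ne_zero n)
    exact div_le_self (norm_nonneg _) this
  refine h1.trans ?_
  rw [norm_pow, norm_mul, norm_pow, mul_pow]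
  have h2 : (‖p‖ ^ k) ^ (n + 1) ≤ ‖p‖ ^ k := by
    rw [← pow_mul]
    exact pow_le_pow_of_le_one (norm_nonneg p) hp.le (Nat.le_mul_of_pos_right k n.succ_pos)
  calc ‖a‖ ^ (n + 1) * (‖p‖ ^ k) ^ (n + 1) ≤ ‖a‖ ^ (n + 1) * ‖p‖ ^ k :=
        mul_le_mul_of_nonneg_left h2 (pow_nonneg (norm_nonneg a) _)
    _ = ‖p‖ ^ k * (‖a‖ * ‖a‖ ^ n) := by ring

include ha hp in
lemma summable_log : Summable (fun k : ℕ => Complex.log (1 - a * p ^ k)) := by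
  have hF := summable_F ha hp
  have hs := hF.prod  -- Summable fun k => ∑' n, F (k, n)
  refine hs.neg.congr fun k => ?_
  rw [(hasSum_neg_log (norm_term_lt ha hp k)).tsum_eq, neg_neg]

include ha hp in
lemma tsum_log_eq :
    ∑' k : ℕ, Complex.log (1 - a * p ^ k)
      = -∑' n : ℕ, a ^ (n + 1) / (((n : ℂ) + 1) * (1 - p ^ (n + 1))) := by
  have hF := summable_F ha hp
  have h1 : ∀ k : ℕ, Complex.log (1 - a * p ^ k)
      = -∑' n : ℕ, (a * p ^ k) ^ (n + 1) / ((n : ℂ) + 1) := fun k => by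
    rw [(hasSum_neg_log (norm_term_lt ha hp k)).tsum_eq, neg_neg]
  calc ∑' k : ℕ, Complex.log (1 - a * p ^ k)
      = ∑' k : ℕ, -∑' n : ℕ, (a * p ^ k) ^ (n + 1) / ((n : ℂ) + 1) := by
        exact tsum_congr h1
    _ = -∑' k : ℕ, ∑' n : ℕ, (a * p ^ k) ^ (n + 1) / ((n : ℂ) + 1) := by rw [tsum_neg]
    _ = -∑' n : ℕ, ∑' k : ℕ, (a * p ^ k) ^ (n + 1) / ((n : ℂ) + 1) := by
        congr 1
        have hF' : Summable (Function.uncurry fun (k n : ℕ) =>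
            (a * p ^ k) ^ (n + 1) / ((n : ℂ) + 1)) :=
          hF.congr fun kn => by simp [Function.uncurry]
        exact (Summable.tsum_comm (f := fun (k n : ℕ) => (a * p ^ k) ^ (n + 1) / ((n : ℂ) + 1)) hF').symm
    _ = -∑' n : ℕ, a ^ (n + 1) / (((n : ℂ) + 1) * (1 - p ^ (n + 1))) := by
        congr 1
        refine tsum_congr fun n => ?_
        have hpn : ‖p ^ (n + 1)‖ < 1 := by
          rw [norm_pow]
          exact pow_lt_one₀ (norm_nonneg p) hp (Nat.succ_ne_zero n)
        calc ∑' k : ℕ, (a * p ^ k) ^ (n + 1) / ((n : ℂ) + 1)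
            = ∑' k : ℕ, (a ^ (n + 1) / ((n : ℂ) + 1)) * (p ^ (n + 1)) ^ k := by
              refine tsum_congr fun k => ?_
              rw [mul_pow, ← pow_mul, ← pow_mul, mul_comm k (n+1)]
              ring
          _ = (a ^ (n + 1) / ((n : ℂ) + 1)) * (1 - p ^ (n + 1))⁻¹ := by
              rw [tsum_mul_left, tsum_geometric_of_norm_lt_one hpn]
          _ = a ^ (n + 1) / (((n : ℂ) + 1) * (1 - p ^ (n + 1))) := by
              rw [← div_eq_mul_inv, div_div]

include ha hp in
lemma summable_g :
    Summable (fun n : ℕ => a ^ (n + 1) / (((n : ℂ) + 1) * (1 - p ^ (n + 1)))) := by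
  have hF := (summable_F ha hp)
  have hswap : Summable (fun nk : ℕ × ℕ => (a * p ^ nk.2) ^ (nk.1 + 1) / ((nk.1 : ℂ) + 1)) := by
    have := hF.comp_injective (Prod.swap_injective (α := ℕ) (β := ℕ))
    exact this
  have hs := hswap.prod
  refine hs.congr fun n => ?_
  have hpn : ‖p ^ (n + 1)‖ < 1 := by
    rw [norm_pow]
    exact pow_lt_one₀ (norm_nonneg p) hp (Nat.succ_ne_zero n)
  calc ∑' k : ℕ, (a * p ^ k) ^ (n + 1) / ((n : ℂ) + 1)
      = ∑' k : ℕ, (a ^ (n + 1) / ((n : ℂ) + 1)) * (p ^ (n + 1)) ^ k := by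
        refine tsum_congr fun k => ?_
        rw [mul_pow, ← pow_mul, ← pow_mul, mul_comm k (n+1)]
        ring
    _ = (a ^ (n + 1) / ((n : ℂ) + 1)) * (1 - p ^ (n + 1))⁻¹ := by
        rw [tsum_mul_left, tsum_geometric_of_norm_lt_one hpn]
    _ = a ^ (n + 1) / (((n : ℂ) + 1) * (1 - p ^ (n + 1))) := by
        rw [← div_eq_mul_inv, div_div]

include ha hp in
lemma tprod_eq_exp :
    ∏' k : ℕ, (1 - a * p ^ k) = Complex.exp (∑' k : ℕ, Complex.log (1 - a * p ^ k)) := by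
  have hne : ∀ k : ℕ, 1 - a * p ^ k ≠ 0 := fun k => one_sub_ne_zero (norm_term_lt ha hp k)
  have := Complex.cexp_tsum_eq_tprod (f := fun k => 1 - a * p ^ k)
    hne (summable_log ha hp)
  exact this.symm

end key

lemma key_alg (u v X m : ℂ) (hu : u ≠ 0) (hv : v ≠ 0) (hm : m ≠ 0)
    (h1v : 1 - v ≠ 0) (h2v : 1 + v ≠ 0) :
    -(u * v * X / (m * (1 - v ^ 2))) + u * v ^ 2 * X / (m * (1 - v ^ 2))
      + (-(X / u / (m * (1 - v ^ 2))) + v * X / u / (m * (1 - v ^ 2)))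
      + X / m
    = 1 / m * ((1 - u) * (1 - (u * v)⁻¹) / (1 + v⁻¹)) * X := by
  have hK : u * m * (1 - v) * (1 + v) ≠ 0 :=
    mul_ne_zero (mul_ne_zero (mul_ne_zero hu hm) h1v) h2v
  have hd : m * (1 - v ^ 2) ≠ 0 := by
    intro h
    apply hK
    calc u * m * (1 - v) * (1 + v) = u * (m * (1 - v ^ 2)) := by ring
      _ = 0 := by rw [h, mul_zero]
  have t1 : u * v * X / (m * (1 - v ^ 2))
      = u * v * X * u / (u * m * (1 - v) * (1 + v)) := by
    rw [div_eq_div_iff hd hK]; ring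
  have t2 : u * v ^ 2 * X / (m * (1 - v ^ 2))
      = u * v ^ 2 * X * u / (u * m * (1 - v) * (1 + v)) := by
    rw [div_eq_div_iff hd hK]; ring
  have t3 : X / u / (m * (1 - v ^ 2)) = X / (u * m * (1 - v) * (1 + v)) := by
    rw [div_div, div_eq_div_iff (mul_ne_zero hu hd) hK]; ring
  have t4 : v * X / u / (m * (1 - v ^ 2)) = v * X / (u * m * (1 - v) * (1 + v)) := by
    rw [div_div, div_eq_div_iff (mul_ne_zero hu hd) hK]; ring
  have t5 : X / m = X * (u * (1 - v) * (1 + v)) / (u * m * (1 - v) * (1 + v)) := by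
    rw [div_eq_div_iff hm hK]; ring
  have hvne : (1 : ℂ) + v⁻¹ ≠ 0 := by
    intro h
    apply h2v
    have := congrArg (fun z => z * v) h
    simp only [add_mul, one_mul, inv_mul_cancel₀ hv, zero_mul] at this
    linear_combination this
  have t6 : 1 / m * ((1 - u) * (1 - (u * v)⁻¹) / (1 + v⁻¹)) * X
      = (u - 1) * (1 - u * v) * X * (1 - v) / (u * m * (1 - v) * (1 + v)) := by
    have h2v' : v + 1 ≠ 0 := fun h => h2v (by linear_combination h)
    field_simp
    ring
  rw [t1, t2, t3, t4, t5, t6]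
  ring

/-- Factorization of the structure function of the deformed Virasoro algebra:
`f(x)·(1-x) = β(q₁qx)·β(q₁⁻¹q⁻¹x)`, where `q₃ = q²`, `q₂ = (q₁q₃)⁻¹`,
`β(y) = (qy; q⁴)_∞/(q³y; q⁴)_∞` and
`f(y) = exp(∑_{n≥1} (1/n)·(1-q₁ⁿ)(1-q₂ⁿ)/(1+q₃⁻ⁿ)·yⁿ)`. -/
theorem structure_function_factorization (q q₁ x : ℂ)
    (hq : ‖q‖ < 1) (hq0 : q ≠ 0) (hq₁ : q₁ ≠ 0)
    (hx : ‖x‖ < 1) (h1 : ‖q₁ * q ^ 2 * x‖ < 1) (h2 : ‖x / q₁‖ < 1) :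
    let q₃ : ℂ := q ^ 2
    let q₂ : ℂ := (q₁ * q₃)⁻¹
    let β : ℂ → ℂ := fun y =>
      (∏' k : ℕ, (1 - q * y * q ^ (4 * k))) / (∏' k : ℕ, (1 - q ^ 3 * y * q ^ (4 * k)))
    let f : ℂ → ℂ := fun y => Complex.exp (∑' n : ℕ,
      (1 / (n + 1 : ℂ)) * ((1 - q₁ ^ (n + 1)) * (1 - q₂ ^ (n + 1)) / (1 + (q₃⁻¹) ^ (n + 1)))
        * y ^ (n + 1))
    f x * (1 - x) = β (q₁ * q * x) * β ((q₁ * q)⁻¹ * x) := by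
  intro q₃ q₂ β f
  simp only [q₂, q₃, β, f]
  have hq2 : ‖q ^ 2‖ < 1 := by
    rw [norm_pow]; exact pow_lt_one₀ (norm_nonneg q) hq two_ne_zero
  have hp : ‖q ^ 4‖ < 1 := by
    rw [norm_pow]; exact pow_lt_one₀ (norm_nonneg q) hq (by norm_num)
  have hA : ‖q₁ * q ^ 2 * x‖ < 1 := h1
  have hB : ‖q₁ * q ^ 4 * x‖ < 1 := by
    have e : q₁ * q ^ 4 * x = q ^ 2 * (q₁ * q ^ 2 * x) := by ring
    rw [e, norm_mul]
    calc ‖q ^ 2‖ * ‖q₁ * q ^ 2 * x‖ ≤ 1 * ‖q₁ * q ^ 2 * x‖ :=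
      mul_le_mul_of_nonneg_right hq2.le (norm_nonneg _)
    _ = ‖q₁ * q ^ 2 * x‖ := one_mul _
    _ < 1 := hA
  have hC : ‖x / q₁‖ < 1 := h2
  have hD : ‖q ^ 2 * x / q₁‖ < 1 := by
    have e : q ^ 2 * x / q₁ = q ^ 2 * (x / q₁) := by ring
    rw [e, norm_mul]
    calc ‖q ^ 2‖ * ‖x / q₁‖ ≤ 1 * ‖x / q₁‖ :=
      mul_le_mul_of_nonneg_right hq2.le (norm_nonneg _)
    _ = ‖x / q₁‖ := one_mul _
    _ < 1 := hC
  -- rewrite the four products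
  have prodA : (∏' k : ℕ, (1 - q * (q₁ * q * x) * q ^ (4 * k)))
      = ∏' k : ℕ, (1 - (q₁ * q ^ 2 * x) * (q ^ 4) ^ k) := by
    refine tprod_congr fun k => ?_
    rw [pow_mul]; ring_nf
  have prodB : (∏' k : ℕ, (1 - q ^ 3 * (q₁ * q * x) * q ^ (4 * k)))
      = ∏' k : ℕ, (1 - (q₁ * q ^ 4 * x) * (q ^ 4) ^ k) := by
    refine tprod_congr fun k => ?_
    rw [pow_mul]; ring_nf
  have prodC : (∏' k : ℕ, (1 - q * ((q₁ * q)⁻¹ * x) * q ^ (4 * k)))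
      = ∏' k : ℕ, (1 - (x / q₁) * (q ^ 4) ^ k) := by
    refine tprod_congr fun k => ?_
    rw [pow_mul]
    field_simp
  have prodD : (∏' k : ℕ, (1 - q ^ 3 * ((q₁ * q)⁻¹ * x) * q ^ (4 * k)))
      = ∏' k : ℕ, (1 - (q ^ 2 * x / q₁) * (q ^ 4) ^ k) := by
    refine tprod_congr fun k => ?_
    rw [pow_mul]
    field_simp
  -- the exponent series
  set g : ℂ → ℕ → ℂ :=
    fun z n => z ^ (n + 1) / (((n : ℂ) + 1) * (1 - (q ^ 4) ^ (n + 1))) with hgdef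
  have hHA : HasSum (g (q₁ * q ^ 2 * x)) (∑' n, g (q₁ * q ^ 2 * x) n) :=
    (summable_g hA hp).hasSum
  have hHB : HasSum (g (q₁ * q ^ 4 * x)) (∑' n, g (q₁ * q ^ 4 * x) n) :=
    (summable_g hB hp).hasSum
  have hHC : HasSum (g (x / q₁)) (∑' n, g (x / q₁) n) := (summable_g hC hp).hasSum
  have hHD : HasSum (g (q ^ 2 * x / q₁)) (∑' n, g (q ^ 2 * x / q₁) n) :=
    (summable_g hD hp).hasSum
  have hE : HasSum (fun n : ℕ => x ^ (n + 1) / ((n : ℂ) + 1)) (-Complex.log (1 - x)) :=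
    hasSum_neg_log hx
  -- termwise identity
  have hterm : ∀ n : ℕ,
      -(g (q₁ * q ^ 2 * x) n) + g (q₁ * q ^ 4 * x) n
        + (-(g (x / q₁) n) + g (q ^ 2 * x / q₁) n) + x ^ (n + 1) / ((n : ℂ) + 1)
      = 1 / ((n : ℂ) + 1) * ((1 - q₁ ^ (n + 1)) * (1 - ((q₁ * q ^ 2)⁻¹) ^ (n + 1))
          / (1 + ((q ^ 2)⁻¹) ^ (n + 1))) * x ^ (n + 1) := by
    intro n
    have hm : ((n : ℂ) + 1) ≠ 0 := Nat.cast_add_one_ne_zero n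
    have hw : ‖(q ^ 2) ^ (n + 1)‖ < 1 := by
      rw [norm_pow]
      exact pow_lt_one₀ (norm_nonneg _) hq2 (Nat.succ_ne_zero n)
    have h1v : 1 - (q ^ 2) ^ (n + 1) ≠ 0 := one_sub_ne_zero hw
    have h2v : 1 + (q ^ 2) ^ (n + 1) ≠ 0 := by
      intro h
      have e : (q ^ 2) ^ (n + 1) = -1 := by linear_combination h
      rw [e] at hw
      simp at hw
    have key := key_alg (q₁ ^ (n + 1)) ((q ^ 2) ^ (n + 1)) (x ^ (n + 1)) ((n : ℂ) + 1)
      (pow_ne_zero _ hq₁) (pow_ne_zero _ (pow_ne_zero _ hq0)) hm h1v h2v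
    rw [hgdef]
    simp only
    rw [show (q₁ * q ^ 2 * x) ^ (n + 1)
          = q₁ ^ (n + 1) * (q ^ 2) ^ (n + 1) * x ^ (n + 1) by
        rw [mul_pow, mul_pow],
      show (q₁ * q ^ 4 * x) ^ (n + 1)
          = q₁ ^ (n + 1) * ((q ^ 2) ^ (n + 1)) ^ 2 * x ^ (n + 1) by
        rw [mul_pow, mul_pow, ← pow_mul, ← pow_mul]; ring_nf,
      show (x / q₁) ^ (n + 1) = x ^ (n + 1) / q₁ ^ (n + 1) from div_pow x q₁ (n + 1),
      show (q ^ 2 * x / q₁) ^ (n + 1)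
          = (q ^ 2) ^ (n + 1) * x ^ (n + 1) / q₁ ^ (n + 1) by
        rw [div_pow, mul_pow],
      show ((q ^ 4 : ℂ)) ^ (n + 1) = ((q ^ 2) ^ (n + 1)) ^ 2 by
        rw [← pow_mul, ← pow_mul]; ring_nf,
      show ((q₁ * q ^ 2)⁻¹) ^ (n + 1) = (q₁ ^ (n + 1) * (q ^ 2) ^ (n + 1))⁻¹ by
        rw [inv_pow, mul_pow],
      show (((q ^ 2 : ℂ))⁻¹) ^ (n + 1) = ((q ^ 2) ^ (n + 1))⁻¹ from inv_pow _ _]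
    exact key
  -- the total sum
  have hT : HasSum (fun n : ℕ =>
      1 / ((n : ℂ) + 1) * ((1 - q₁ ^ (n + 1)) * (1 - ((q₁ * q ^ 2)⁻¹) ^ (n + 1))
        / (1 + ((q ^ 2)⁻¹) ^ (n + 1))) * x ^ (n + 1))
      ((-∑' n, g (q₁ * q ^ 2 * x) n + ∑' n, g (q₁ * q ^ 4 * x) n)
        + (-∑' n, g (x / q₁) n + ∑' n, g (q ^ 2 * x / q₁) n) + -Complex.log (1 - x)) := by
    have h := ((hHA.neg.add hHB).add (hHC.neg.add hHD)).add hE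
    exact (funext hterm : _ = _) ▸ h
  have hlogx : (1 : ℂ) - x ≠ 0 := one_sub_ne_zero hx
  have hbeta1 : (∏' k : ℕ, (1 - q * (q₁ * q * x) * q ^ (4 * k)))
        / (∏' k : ℕ, (1 - q ^ 3 * (q₁ * q * x) * q ^ (4 * k)))
      = Complex.exp (-∑' n, g (q₁ * q ^ 2 * x) n + ∑' n, g (q₁ * q ^ 4 * x) n) := by
    rw [prodA, prodB, tprod_eq_exp hA hp, tprod_eq_exp hB hp,
      tsum_log_eq hA hp, tsum_log_eq hB hp, ← Complex.exp_sub, sub_neg_eq_add]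
  have hbeta2 : (∏' k : ℕ, (1 - q * ((q₁ * q)⁻¹ * x) * q ^ (4 * k)))
        / (∏' k : ℕ, (1 - q ^ 3 * ((q₁ * q)⁻¹ * x) * q ^ (4 * k)))
      = Complex.exp (-∑' n, g (x / q₁) n + ∑' n, g (q ^ 2 * x / q₁) n) := by
    rw [prodC, prodD, tprod_eq_exp hC hp, tprod_eq_exp hD hp,
      tsum_log_eq hC hp, tsum_log_eq hD hp, ← Complex.exp_sub, sub_neg_eq_add]
  rw [hT.tsum_eq, hbeta1, hbeta2, Complex.exp_add, Complex.exp_add, Complex.exp_neg,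
    Complex.exp_log hlogx, mul_assoc, inv_mul_cancel₀ hlogx, mul_one]
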